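/- (Deterministic core of GRH: centered instances are solvable with makespan m1 + 2·m2 + O(1).) There exists a universal constant C such that the following holds. Let m1 ≥ m2 be positive multiples of 3 and consider the m1×m2 grid graph. Let n ≥ 1 and let s, g : Fin n → V be injective start and goal maps such that every start vertex s i and every goal vertex g i has column coordinate congruent to 1 modulo 3 (i.e., all agents start and end on the middle columns of the 3×3 cells, so each 3×3 cell contains at most 3 agents and n ≤ m1·m2/3). Then there exists a feasible path set with makespan at most m1 + 2·m2 + C. -/

import Mathlib

set_option maxHeartbeats 1000000

/-- Two vertices of the `m1 × m2` grid graph are adjacent iff their Manhattan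
distance equals `1`. -/
def GridAdj {m1 m2 : ℕ} (u v : Fin m1 × Fin m2) : Prop :=
  (((u.1 : ℕ) : ℤ) - ((v.1 : ℕ) : ℤ)).natAbs + (((u.2 : ℕ) : ℤ) - ((v.2 : ℕ) : ℤ)).natAbs = 1

/-- A feasible path set for the MAPF instance `(s, g)` on the `m1 × m2` grid:
each agent's path starts at its start vertex, moves along grid edges or waits,
eventually stays at its goal, and no two agents ever collide on a vertex or
swap along an edge. -/
def FeasiblePathSet {m1 m2 n : ℕ} (s g : Fin n → Fin m1 × Fin m2)
    (P : Fin n → ℕ → Fin m1 × Fin m2) : Prop :=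
  (∀ i, P i 0 = s i) ∧
  (∀ i, ∀ t : ℕ, 0 < t → (P i t = P i (t - 1) ∨ GridAdj (P i (t - 1)) (P i t))) ∧
  (∀ i, ∃ T, ∀ t ≥ T, P i t = g i) ∧
  (∀ t, ∀ i j, i ≠ j → P i t ≠ P j t) ∧
  (∀ t, ∀ i j, i ≠ j → ¬(P i t = P j (t + 1) ∧ P j t = P i (t + 1)))

/-- The makespan of the path set `P` is at most `K`. -/
def MakespanLE {m1 m2 n : ℕ} (g : Fin n → Fin m1 × Fin m2)
    (P : Fin n → ℕ → Fin m1 × Fin m2) (K : ℕ) : Prop :=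
  ∀ i, ∀ t, K ≤ t → P i t = g i

namespace GRH

def cstep (w r : ℕ) : ℕ := if w < r then w + 1 else if r < w then w - 1 else w

def role (x D : ℕ) : ℕ := if x < D then 0 else if D < x then 2 else 1

def phPos (a w D : ℕ) : ℕ → ℕ × ℕ
  | 0 => (w, 3*a+1)
  | 1 => (w, 3*a+w)
  | 2 => (cstep w (role (3*a+w) D), 3*a+w)
  | 3 => (role (3*a+w) D, 3*a+w)
  | (k+4) =>
    if 3*a+w < D then (if k + 1 ≤ D - (3*a+w) then (0, (3*a+w) + (k+1)) else (1, D))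
    else if D < 3*a+w then (if k + 1 ≤ (3*a+w) - D then (2, (3*a+w) - (k+1)) else (1, D))
    else (1, D)

def NatAdj (u v : ℕ × ℕ) : Prop :=
  (u.1 = v.1 ∧ (u.2 + 1 = v.2 ∨ v.2 + 1 = u.2)) ∨ (u.2 = v.2 ∧ (u.1 + 1 = v.1 ∨ v.1 + 1 = u.1))

theorem phPos_zero (a w D : ℕ) : phPos a w D 0 = (w, 3*a+1) := rfl

theorem phPos_stable {a w D M : ℕ} (ha : 3*a+2 < M) (hD : D < M) (hw : w ≤ 2) {k : ℕ}
    (hk : M + 3 ≤ k) : phPos a w D k = (1, D) := by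
  rcases k with _|_|_|_|k
  · omega
  · omega
  · omega
  · omega
  · simp only [phPos]
    split_ifs <;> first | rfl | (exfalso; omega)

theorem phPos_cross_le {a w D : ℕ} (hw : w ≤ 2) (k : ℕ) : (phPos a w D k).1 ≤ 2 := by
  rcases k with _|_|_|_|k <;> simp only [phPos, cstep, role] <;> (try split_ifs) <;> (try simp) <;> omega

theorem phPos_along_lt {a w D M : ℕ} (ha : 3*a+2 < M) (hD : D < M) (hw : w ≤ 2) (k : ℕ) :
    (phPos a w D k).2 < M := by
  rcases k with _|_|_|_|k <;> simp only [phPos, cstep, role] <;> (try split_ifs) <;> (try simp) <;> omega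

theorem phPos_step {a w D : ℕ} (hw : w ≤ 2) (k : ℕ) :
    phPos a w D (k+1) = phPos a w D k ∨ NatAdj (phPos a w D k) (phPos a w D (k+1)) := by
  rcases k with _|_|_|_|k <;>
    (simp only [phPos, cstep, role, NatAdj]; (try split_ifs) <;> (try simp) <;> omega)

theorem phPos_disj {a w D a' w' D' : ℕ} (hw : w ≤ 2) (hw' : w' ≤ 2)
    (hne : ¬(a = a' ∧ w = w')) (hD : D ≠ D') (k : ℕ) :
    phPos a w D k ≠ phPos a' w' D' k := by
  rcases k with _|_|_|_|k <;>
    (simp only [phPos, cstep, role]; (try split_ifs) <;> (intro h; rw [Prod.mk.injEq] at h; omega))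

theorem phPos_noswap {a w D a' w' D' : ℕ} (hw : w ≤ 2) (hw' : w' ≤ 2)
    (hne : ¬(a = a' ∧ w = w')) (hD : D ≠ D') (k : ℕ) :
    ¬(phPos a w D k = phPos a' w' D' (k+1) ∧ phPos a' w' D' k = phPos a w D (k+1)) := by
  rcases k with _|_|_|_|k <;>
    (simp only [phPos, cstep, role]; (try split_ifs) <;>
      (intro h; rw [Prod.mk.injEq, Prod.mk.injEq] at h; omega))

theorem sum_eq_of_le {q D : ℕ} (f : Fin q → ℕ) (hle : ∀ r, f r ≤ D)
    (htot : ∑ r, f r = q * D) : ∀ r, f r = D := by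
  intro r
  by_contra hne
  have hlt : f r < D := lt_of_le_of_ne (hle r) hne
  have : ∑ r, f r < ∑ _r : Fin q, D :=
    Finset.sum_lt_sum (fun i _ => hle i) ⟨r, Finset.mem_univ r, hlt⟩
  rw [Finset.sum_const, Finset.card_univ, Fintype.card_fin, smul_eq_mul] at this
  omega

theorem pad_aux (q D : ℕ) :
    ∀ d (M0 : Fin q → Fin q → ℕ), (∀ r, ∑ a, M0 r a ≤ D) → (∀ a, ∑ r, M0 r a ≤ D) →
    (q * D ≤ (∑ r, ∑ a, M0 r a) + d) →
    ∃ M : Fin q → Fin q → ℕ, (∀ r a, M0 r a ≤ M r a) ∧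
      (∀ r, ∑ a, M r a = D) ∧ (∀ a, ∑ r, M r a = D) := by
  intro d
  induction d with
  | zero =>
    intro M0 hr hc htot
    have htot' : ∑ r, ∑ a, M0 r a = q * D := by
      have h1 : ∑ r, ∑ a, M0 r a ≤ ∑ _r : Fin q, D := Finset.sum_le_sum fun i _ => hr i
      rw [Finset.sum_const, Finset.card_univ, Fintype.card_fin, smul_eq_mul] at h1
      omega
    refine ⟨M0, fun r a => le_refl _, sum_eq_of_le _ hr htot', ?_⟩
    have hcomm : ∑ a, ∑ r, M0 r a = q * D := by rw [Finset.sum_comm]; exact htot'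
    exact sum_eq_of_le _ hc hcomm
  | succ d ih =>
    intro M0 hr hc htot
    by_cases hT : q * D ≤ ∑ r, ∑ a, M0 r a
    · exact ih M0 hr hc (le_trans hT (Nat.le_add_right _ _))
    · push_neg at hT
      have hex_r : ∃ r0, ∑ a, M0 r0 a < D := by
        by_contra h
        push_neg at h
        have : ∀ r, ∑ a, M0 r a = D := fun r => le_antisymm (hr r) (h r)
        have : ∑ r, ∑ a, M0 r a = q * D := by
          simp only [this, Finset.sum_const, Finset.card_univ, Fintype.card_fin, smul_eq_mul]
        omega
      have hex_a : ∃ a0, ∑ r, M0 r a0 < D := by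
        by_contra h
        push_neg at h
        have heq : ∀ a, ∑ r, M0 r a = D := fun a => le_antisymm (hc a) (h a)
        have : ∑ a, ∑ r, M0 r a = q * D := by
          simp only [heq, Finset.sum_const, Finset.card_univ, Fintype.card_fin, smul_eq_mul]
        rw [Finset.sum_comm] at this
        omega
      obtain ⟨r0, hr0⟩ := hex_r
      obtain ⟨a0, ha0⟩ := hex_a
      set M1 : Fin q → Fin q → ℕ :=
        fun r a => M0 r a + (if r = r0 ∧ a = a0 then 1 else 0) with hM1
      have hrow : ∀ r, ∑ a, M1 r a = (∑ a, M0 r a) + (if r = r0 then 1 else 0) := by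
        intro r
        rw [hM1]
        rw [Finset.sum_add_distrib]
        congr 1
        by_cases h : r = r0
        · subst h
          simp
        · simp [h]
      have hcol : ∀ a, ∑ r, M1 r a = (∑ r, M0 r a) + (if a = a0 then 1 else 0) := by
        intro a
        rw [hM1]
        rw [Finset.sum_add_distrib]
        congr 1
        by_cases h : a = a0
        · subst h
          simp
        · simp [h]
      have hr1 : ∀ r, ∑ a, M1 r a ≤ D := by
        intro r
        rw [hrow]
        by_cases h : r = r0
        · subst h; simp; omega
        · simp [h]; exact hr r
      have hc1 : ∀ a, ∑ r, M1 r a ≤ D := by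
        intro a
        rw [hcol]
        by_cases h : a = a0
        · subst h; simp; omega
        · simp [h]; exact hc a
      have htot1 : ∑ r, ∑ a, M1 r a = (∑ r, ∑ a, M0 r a) + 1 := by
        have : ∑ r, ∑ a, M1 r a = ∑ r, ((∑ a, M0 r a) + (if r = r0 then 1 else 0)) :=
          Finset.sum_congr rfl fun r _ => hrow r
        rw [this, Finset.sum_add_distrib]
        simp
      obtain ⟨M, hge, hrows, hcols⟩ := ih M1 hr1 hc1 (by omega)
      exact ⟨M, fun r a => le_trans (by rw [hM1]; dsimp only; split_ifs <;> omega)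
        (hge r a), hrows, hcols⟩

theorem decomp {q : ℕ} :
    ∀ (D : ℕ) (M : Fin q → Fin q → ℕ), (∀ r, ∑ a, M r a = D) → (∀ a, ∑ r, M r a = D) →
    ∃ f : Fin D → Fin q → Fin q, (∀ d, Function.Injective (f d)) ∧
      ∀ r a, M r a = (Finset.univ.filter fun d => f d r = a).card := by
  intro D
  induction D with
  | zero =>
    intro M hr hc
    refine ⟨fun d => d.elim0, fun d => d.elim0, fun r a => ?_⟩
    have h0 : M r a = 0 := by
      have := hr r
      rw [Finset.sum_eq_zero_iff] at this
      exact this a (Finset.mem_univ a)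
    simp [h0]
  | succ D ih =>
    intro M hr hc
    set t : Fin q → Finset (Fin q) := fun r => Finset.univ.filter fun a => 0 < M r a with ht
    have hall : ∀ S : Finset (Fin q), S.card ≤ (S.biUnion t).card := by
      intro S
      set B := S.biUnion t with hB
      have h1 : ∀ r ∈ S, ∑ a, M r a = ∑ a ∈ B, M r a := by
        intro r hrS
        refine (Finset.sum_subset (Finset.subset_univ B) ?_).symm
        intro a _ haB
        by_contra hpos
        exact haB (Finset.mem_biUnion.mpr ⟨r, hrS, by
          rw [ht]; simp only [Finset.mem_filter]; exact ⟨Finset.mem_univ a, Nat.pos_of_ne_zero hpos⟩⟩)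
      have h2 : (D+1) * S.card = ∑ r ∈ S, ∑ a ∈ B, M r a := by
        rw [← Finset.sum_congr rfl h1]
        simp only [hr, Finset.sum_const, smul_eq_mul]
        ring
      have h3 : ∑ r ∈ S, ∑ a ∈ B, M r a ≤ (D+1) * B.card := by
        rw [Finset.sum_comm]
        have : ∀ a ∈ B, ∑ r ∈ S, M r a ≤ D + 1 := by
          intro a _
          calc ∑ r ∈ S, M r a ≤ ∑ r, M r a :=
                Finset.sum_le_sum_of_subset (Finset.subset_univ S)
            _ = D + 1 := hc a
        calc ∑ a ∈ B, ∑ r ∈ S, M r a ≤ ∑ _a ∈ B, (D+1) := Finset.sum_le_sum this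
          _ = (D+1) * B.card := by rw [Finset.sum_const, smul_eq_mul]; ring
      have := h2 ▸ h3
      exact Nat.le_of_mul_le_mul_left this (Nat.succ_pos D)
    obtain ⟨σ, hσinj, hσmem⟩ := (Finset.all_card_le_biUnion_card_iff_exists_injective t).mp hall
    have hpos : ∀ r, 0 < M r (σ r) := by
      intro r
      have := hσmem r
      rw [ht] at this
      simp only [Finset.mem_filter] at this
      exact this.2
    have hσsurj : Function.Surjective σ := Finite.surjective_of_injective hσinj
    set M' : Fin q → Fin q → ℕ := fun r a => M r a - (if σ r = a then 1 else 0) with hM'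
    have hSrow : ∀ r, (∑ a ∈ Finset.univ.erase (σ r), M r a) + M r (σ r) = ∑ a, M r a :=
      fun r => Finset.sum_erase_add _ _ (Finset.mem_univ _)
    have hrow' : ∀ r, ∑ a, M' r a = D := by
      intro r
      have he : ∑ a ∈ Finset.univ.erase (σ r), M' r a = ∑ a ∈ Finset.univ.erase (σ r), M r a := by
        refine Finset.sum_congr rfl fun a ha => ?_
        have : σ r ≠ a := fun h => (Finset.mem_erase.mp ha).1 h.symm
        simp [hM', this]
      have h2 : (∑ a ∈ Finset.univ.erase (σ r), M' r a) + M' r (σ r) = ∑ a, M' r a :=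
        Finset.sum_erase_add _ _ (Finset.mem_univ _)
      have h3 : M' r (σ r) = M r (σ r) - 1 := by simp [hM']
      have := hSrow r
      have := hr r
      have := hpos r
      omega
    have hcol' : ∀ a, ∑ r, M' r a = D := by
      intro a
      obtain ⟨ra, hra⟩ := hσsurj a
      have he : ∑ r ∈ Finset.univ.erase ra, M' r a = ∑ r ∈ Finset.univ.erase ra, M r a := by
        refine Finset.sum_congr rfl fun r hrm => ?_
        have hne : σ r ≠ a := by
          intro h
          exact (Finset.mem_erase.mp hrm).1 (hσinj (h.trans hra.symm))
        simp [hM', hne]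
      have h2 : (∑ r ∈ Finset.univ.erase ra, M' r a) + M' ra a = ∑ r, M' r a :=
        Finset.sum_erase_add _ _ (Finset.mem_univ _)
      have h2' : (∑ r ∈ Finset.univ.erase ra, M r a) + M ra a = ∑ r, M r a :=
        Finset.sum_erase_add _ _ (Finset.mem_univ _)
      have h3 : M' ra a = M ra a - 1 := by simp [hM', hra]
      have h4 := hpos ra
      rw [hra] at h4
      have := hc a
      omega
    obtain ⟨f', hf'inj, hf'cnt⟩ := ih M' hrow' hcol'
    refine ⟨Fin.cases σ f', ?_, ?_⟩
    · intro d
      refine Fin.cases ?_ ?_ d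
      · simpa using hσinj
      · intro d'
        simpa using hf'inj d'
    · intro r a
      have hcard : (Finset.univ.filter fun d : Fin (D+1) => Fin.cases σ f' d r = a).card
          = (if σ r = a then 1 else 0) + (Finset.univ.filter fun d : Fin D => f' d r = a).card := by
        rw [Finset.card_filter, Finset.card_filter, Fin.sum_univ_succ]
        simp
        rw [Finset.card_filter]
        congr
      rw [hcard, ← hf'cnt r a]
      have hp := hpos r
      by_cases h : σ r = a
      · subst h
        simp [hM']
        omega
      · simp [hM', h]

theorem rank_lt_card {N : ℕ} {s : Finset (Fin N)} {i : Fin N} (hi : i ∈ s) :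
    (s.filter (· < i)).card < s.card := by
  refine Finset.card_lt_card ⟨Finset.filter_subset _ _, ?_⟩
  intro hsub
  have := hsub hi
  simp at this

theorem rank_inj {N : ℕ} {s : Finset (Fin N)} {i j : Fin N} (hi : i ∈ s) (hj : j ∈ s)
    (h : (s.filter (· < i)).card = (s.filter (· < j)).card) : i = j := by
  have key : ∀ {x y : Fin N}, x ∈ s → x < y → s.filter (· < x) ⊂ s.filter (· < y) := by
    intro x y hx hxy
    constructor
    · intro z hz
      rw [Finset.mem_filter] at hz ⊢
      exact ⟨hz.1, lt_trans hz.2 hxy⟩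
    · intro hsub
      have hx' : x ∈ s.filter (· < y) := Finset.mem_filter.mpr ⟨hx, hxy⟩
      have := hsub hx'
      rw [Finset.mem_filter] at this
      exact absurd this.2 (lt_irrefl x)
  rcases lt_trichotomy i j with hlt | he | hlt
  · exact absurd h (Nat.ne_of_lt (Finset.card_lt_card (key hi hlt)))
  · exact he
  · exact absurd h.symm (Nat.ne_of_lt (Finset.card_lt_card (key hj hlt)))



theorem getD_inj {D : ℕ} {l : List (Fin D)} (hnd : l.Nodup) {p q : ℕ} {d : Fin D}
    (hp : p < l.length) (hq : q < l.length) (h : l.getD p d = l.getD q d) : p = q := by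
  rw [List.getD_eq_getElem (hn := hp), List.getD_eq_getElem (hn := hq)] at h
  exact (List.Nodup.getElem_inj_iff hnd).mp h

theorem coloring {n q D : ℕ} (hD : 0 < D) (R A : Fin n → Fin q)
    (hR : ∀ r : Fin q, (Finset.univ.filter fun i => R i = r).card ≤ D)
    (hA : ∀ a : Fin q, (Finset.univ.filter fun i => A i = a).card ≤ D) :
    ∃ c : Fin n → Fin D,
      (∀ i j, R i = R j → c i = c j → i = j) ∧
      (∀ i j, A i = A j → c i = c j → i = j) := by
  classical
  set M0 : Fin q → Fin q → ℕ :=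
    fun r a => (Finset.univ.filter fun i => R i = r ∧ A i = a).card with hM0
  have hrowM0 : ∀ r, ∑ a, M0 r a = (Finset.univ.filter fun i => R i = r).card := by
    intro r
    rw [Finset.card_eq_sum_card_fiberwise (f := A) (t := Finset.univ) (fun x _ => Finset.mem_univ _)]
    refine Finset.sum_congr rfl fun a _ => ?_
    rw [hM0, Finset.filter_filter]
  have hcolM0 : ∀ a, ∑ r, M0 r a = (Finset.univ.filter fun i => A i = a).card := by
    intro a
    rw [Finset.card_eq_sum_card_fiberwise (f := R) (t := Finset.univ) (fun x _ => Finset.mem_univ _)]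
    refine Finset.sum_congr rfl fun r _ => ?_
    rw [hM0, Finset.filter_filter]
    exact congrArg Finset.card (Finset.filter_congr fun x _ => and_comm)
  obtain ⟨M, hge, hrows, hcols⟩ := pad_aux q D (q * D) M0
    (fun r => (hrowM0 r) ▸ hR r) (fun a => (hcolM0 a) ▸ hA a) (Nat.le_add_left _ _)
  obtain ⟨f, hfinj, hfcnt⟩ := decomp D M hrows hcols
  set Dset : Fin q → Fin q → Finset (Fin D) :=
    fun r a => Finset.univ.filter fun d => f d r = a with hDset
  set Lst : Fin q → Fin q → List (Fin D) := fun r a => (Dset r a).sort (· ≤ ·) with hLst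
  set fib : Fin n → Finset (Fin n) :=
    fun i => Finset.univ.filter fun j => R j = R i ∧ A j = A i with hfib
  set rk : Fin n → ℕ := fun i => ((fib i).filter (· < i)).card with hrk
  have hmemfib : ∀ i, i ∈ fib i := fun i => by
    rw [hfib]; exact Finset.mem_filter.mpr ⟨Finset.mem_univ i, rfl, rfl⟩
  have hfibcard : ∀ i, (fib i).card = M0 (R i) (A i) := fun i => rfl
  have hlen : ∀ i, rk i < (Lst (R i) (A i)).length := by
    intro i
    rw [hLst, Finset.length_sort]
    calc rk i < (fib i).card := rank_lt_card (hmemfib i)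
      _ = M0 (R i) (A i) := hfibcard i
      _ ≤ M (R i) (A i) := hge _ _
      _ = (Dset (R i) (A i)).card := by rw [hfcnt]
  set c : Fin n → Fin D := fun i => (Lst (R i) (A i)).getD (rk i) ⟨0, hD⟩ with hc
  have hcmem : ∀ i, f (c i) (R i) = A i := by
    intro i
    have : c i ∈ Dset (R i) (A i) := by
      rw [hc]
      dsimp only
      rw [List.getD_eq_getElem (hn := hlen i)]
      rw [← Finset.mem_sort (α := Fin D) (· ≤ ·)]
      exact List.getElem_mem _
    rw [hDset] at this
    exact (Finset.mem_filter.mp this).2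
  have key : ∀ i j, R i = R j → A i = A j → c i = c j → i = j := by
    intro i j hRij hAij hcij
    have hfibeq : fib j = fib i := by rw [hfib]; simp only [hRij, hAij]
    have hLeq : Lst (R j) (A j) = Lst (R i) (A i) := by rw [hRij, hAij]
    have hcj : c j = (Lst (R i) (A i)).getD (rk j) ⟨0, hD⟩ := by
      rw [hc]; dsimp only; rw [hLeq]
    have hci : c i = (Lst (R i) (A i)).getD (rk i) ⟨0, hD⟩ := rfl
    have hlenj : rk j < (Lst (R i) (A i)).length := by rw [← hLeq]; exact hlen j
    have hrkeq : rk i = rk j :=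
      getD_inj (Finset.sort_nodup _ _) (hlen i) hlenj (by rw [← hci, ← hcj]; exact hcij)
    have hrkj : rk j = ((fib i).filter (· < j)).card := by rw [hrk]; dsimp only; rw [hfibeq]
    refine rank_inj (s := fib i) (hmemfib i) ?_ ?_
    · exact hfibeq ▸ hmemfib j
    · rw [← hrkj]; exact hrkeq
  refine ⟨c, ?_, ?_⟩
  · intro i j hRij hcij
    have hAij : A i = A j := by
      rw [← hcmem i, ← hcmem j, hRij, hcij]
    exact key i j hRij hAij hcij
  · intro i j hAij hcij
    have hRij : R i = R j := by
      have := hcmem i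
      rw [hAij, hcij, ← hcmem j] at this
      exact hfinj (c j) this
    exact key i j hRij hAij hcij

theorem natAdj_symm {u v : ℕ × ℕ} (h : NatAdj u v) : NatAdj v u := by
  unfold NatAdj at *; omega

theorem natAdj_emb1 (x : ℕ) {u v : ℕ × ℕ} (h : NatAdj u v) :
    NatAdj (x + u.1, u.2) (x + v.1, v.2) := by
  unfold NatAdj at *; dsimp only; omega

theorem natAdj_emb2 (x : ℕ) {u v : ℕ × ℕ} (h : NatAdj u v) :
    NatAdj (u.2, x + u.1) (v.2, x + v.1) := by
  unfold NatAdj at *; dsimp only; omega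

theorem emb1_eq (x : ℕ) {u v : ℕ × ℕ} (h : u = v) : (x + u.1, u.2) = (x + v.1, v.2) := by rw [h]
theorem emb2_eq (x : ℕ) {u v : ℕ × ℕ} (h : u = v) : (u.2, x + u.1) = (v.2, x + v.1) := by rw [h]

theorem emb1_cancel {x : ℕ} {u v : ℕ × ℕ} (h : (x + u.1, u.2) = (x + v.1, v.2)) : u = v := by
  rw [Prod.mk.injEq] at h
  exact Prod.ext (by omega) h.2

theorem emb2_cancel {x : ℕ} {u v : ℕ × ℕ} (h : (u.2, x + u.1) = (v.2, x + v.1)) : u = v := by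
  rw [Prod.mk.injEq] at h
  exact Prod.ext (by omega) h.1

theorem emb1_ne' {x y : ℕ} {u v : ℕ × ℕ} (hu : u.1 ≤ 2) (hv : v.1 ≤ 2) (hxy : x ≠ y) :
    (3*x + u.1, u.2) ≠ (3*y + v.1, v.2) := by
  intro h; rw [Prod.mk.injEq] at h; omega

theorem emb2_ne' {x y : ℕ} {u v : ℕ × ℕ} (hu : u.1 ≤ 2) (hv : v.1 ≤ 2) (hxy : x ≠ y) :
    (u.2, 3*x + u.1) ≠ (v.2, 3*y + v.1) := by
  intro h; rw [Prod.mk.injEq] at h; omega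

end GRH

/-- Deterministic core of GRH: there is a universal constant `C` such that on
any `m1 × m2` grid with `m1 ≥ m2` positive multiples of `3`, every MAPF
instance whose starts and goals all lie on the middle columns of the `3×3`
cells (column coordinate `≡ 1 (mod 3)`) admits a feasible path set with
makespan at most `m1 + 2 m2 + C`. -/
theorem grh_centered_instances_makespan :
    ∃ C : ℕ, ∀ m1 m2 n : ℕ, m2 ≤ m1 → 0 < m2 → 3 ∣ m1 → 3 ∣ m2 → 1 ≤ n →
      ∀ s g : Fin n → Fin m1 × Fin m2,
        Function.Injective s → Function.Injective g →
        (∀ i, ((s i).2 : ℕ) % 3 = 1) → (∀ i, ((g i).2 : ℕ) % 3 = 1) →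
        ∃ P : Fin n → ℕ → Fin m1 × Fin m2,
          FeasiblePathSet s g P ∧ MakespanLE g P (m1 + 2 * m2 + C) := by
  classical
  refine ⟨20, ?_⟩
  intro m1 m2 n hm21 hm2pos hdvd1 hdvd2 hn s g hsinj hginj hsmid hgmid
  obtain ⟨q, hq⟩ := hdvd1
  obtain ⟨k2, hk2⟩ := hdvd2
  set ρ0 : Fin n → ℕ := fun i => ((s i).1 : ℕ) with hρ0def
  set γ0 : Fin n → ℕ := fun i => ((s i).2 : ℕ) with hγ0def
  set ρg : Fin n → ℕ := fun i => ((g i).1 : ℕ) with hρgdef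
  set γg : Fin n → ℕ := fun i => ((g i).2 : ℕ) with hγgdef
  have hρ0lt : ∀ i, ρ0 i < m1 := fun i => (s i).1.isLt
  have hγ0lt : ∀ i, γ0 i < m2 := fun i => (s i).2.isLt
  have hρglt : ∀ i, ρg i < m1 := fun i => (g i).1.isLt
  have hγglt : ∀ i, γg i < m2 := fun i => (g i).2.isLt
  have hγ0m : ∀ i, γ0 i % 3 = 1 := hsmid
  have hγgm : ∀ i, γg i % 3 = 1 := hgmid
  have hsval : ∀ i j, ρ0 i = ρ0 j → γ0 i = γ0 j → i = j := fun i j h1 h2 =>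
    hsinj (Prod.ext (Fin.ext h1) (Fin.ext h2))
  have hgval : ∀ i j, ρg i = ρg j → γg i = γg j → i = j := fun i j h1 h2 =>
    hginj (Prod.ext (Fin.ext h1) (Fin.ext h2))
  set R0 : Fin n → ℕ := fun i => ρ0 i / 3 with hR0def
  set U0 : Fin n → ℕ := fun i => ρ0 i % 3 with hU0def
  set J0 : Fin n → ℕ := fun i => γ0 i / 3 with hJ0def
  set AG : Fin n → ℕ := fun i => ρg i / 3 with hAGdef
  set PG : Fin n → ℕ := fun i => ρg i % 3 with hPGdef
  set JG : Fin n → ℕ := fun i => γg i / 3 with hJGdef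
  have hρ0eq : ∀ i, ρ0 i = 3 * R0 i + U0 i := fun i => by
    simp only [hR0def, hU0def]; omega
  have hγ0eq : ∀ i, γ0 i = 3 * J0 i + 1 := fun i => by
    have := hγ0m i; simp only [hJ0def]; omega
  have hρgeq : ∀ i, ρg i = 3 * AG i + PG i := fun i => by
    simp only [hAGdef, hPGdef]; omega
  have hγgeq : ∀ i, γg i = 3 * JG i + 1 := fun i => by
    have := hγgm i; simp only [hJGdef]; omega
  have hU0le : ∀ i, U0 i ≤ 2 := fun i => by simp only [hU0def]; omega
  have hPGle : ∀ i, PG i ≤ 2 := fun i => by simp only [hPGdef]; omega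
  have h3R0 : ∀ i, 3 * R0 i + 2 < m1 := fun i => by
    have := hρ0lt i; have := hρ0eq i; have := hU0le i; omega
  have h3AG : ∀ i, 3 * AG i + 2 < m1 := fun i => by
    have := hρglt i; have := hρgeq i; have := hPGle i; omega
  have h3J0 : ∀ i, 3 * J0 i + 2 < m2 := fun i => by
    have := hγ0lt i; have := hγ0eq i; omega
  have h3JG : ∀ i, 3 * JG i + 2 < m2 := fun i => by
    have := hγglt i; have := hγgeq i; omega
  have hR0q : ∀ i, R0 i < q := fun i => by
    have := hρ0lt i; have := hρ0eq i; omega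
  have hAGq : ∀ i, AG i < q := fun i => by
    have := hρglt i; have := hρgeq i; omega
  have hU03 : ∀ i, U0 i < 3 := fun i => by have := hU0le i; omega
  have hPG3 : ∀ i, PG i < 3 := fun i => by have := hPGle i; omega
  have hJ0k : ∀ i, J0 i < k2 := fun i => by have := h3J0 i; omega
  have hJGk : ∀ i, JG i < k2 := fun i => by have := h3JG i; omega
  -- the coloring
  set Rf : Fin n → Fin q := fun i => ⟨R0 i, hR0q i⟩ with hRfdef
  set Af : Fin n → Fin q := fun i => ⟨AG i, hAGq i⟩ with hAfdef
  have hRcard : ∀ r : Fin q, (Finset.univ.filter fun i => Rf i = r).card ≤ m2 := by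
    intro r
    have hinj : Set.InjOn (fun i => ((⟨U0 i, hU03 i⟩ : Fin 3), (⟨J0 i, hJ0k i⟩ : Fin k2)))
        ((Finset.univ.filter fun i => Rf i = r) : Finset (Fin n)) := by
      intro i hi j hj he
      rw [Finset.coe_filter] at hi hj
      simp only [Set.mem_setOf_eq] at hi hj
      rw [Prod.mk.injEq, Fin.mk.injEq, Fin.mk.injEq] at he
      have hR : R0 i = R0 j := by
        have := hi.2.trans hj.2.symm
        rw [hRfdef] at this
        simpa [Fin.mk.injEq] using this
      refine hsval i j ?_ ?_
      · rw [hρ0eq i, hρ0eq j, hR, he.1]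
      · rw [hγ0eq i, hγ0eq j, he.2]
    calc (Finset.univ.filter fun i => Rf i = r).card
        ≤ (Finset.univ : Finset (Fin 3 × Fin k2)).card :=
          Finset.card_le_card_of_injOn _ (fun a _ => Finset.mem_univ _) hinj
      _ = m2 := by simp [hk2]
  have hAcard : ∀ a : Fin q, (Finset.univ.filter fun i => Af i = a).card ≤ m2 := by
    intro a
    have hinj : Set.InjOn (fun i => ((⟨PG i, hPG3 i⟩ : Fin 3), (⟨JG i, hJGk i⟩ : Fin k2)))
        ((Finset.univ.filter fun i => Af i = a) : Finset (Fin n)) := by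
      intro i hi j hj he
      rw [Finset.coe_filter] at hi hj
      simp only [Set.mem_setOf_eq] at hi hj
      rw [Prod.mk.injEq, Fin.mk.injEq, Fin.mk.injEq] at he
      have hA : AG i = AG j := by
        have := hi.2.trans hj.2.symm
        rw [hAfdef] at this
        simpa [Fin.mk.injEq] using this
      refine hgval i j ?_ ?_
      · rw [hρgeq i, hρgeq j, hA, he.1]
      · rw [hγgeq i, hγgeq j, he.2]
    calc (Finset.univ.filter fun i => Af i = a).card
        ≤ (Finset.univ : Finset (Fin 3 × Fin k2)).card :=
          Finset.card_le_card_of_injOn _ (fun x _ => Finset.mem_univ _) hinj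
      _ = m2 := by simp [hk2]
  obtain ⟨c, hcR, hcA⟩ := GRH.coloring hm2pos Rf Af hRcard hAcard
  set cN : Fin n → ℕ := fun i => (c i : ℕ) with hcNdef
  have hcNlt : ∀ i, cN i < m2 := fun i => (c i).isLt
  have hc1 : ∀ i j, R0 i = R0 j → cN i = cN j → i = j := by
    intro i j h1 h2
    refine hcR i j ?_ ?_
    · rw [hRfdef]; exact Fin.ext h1
    · exact Fin.ext h2
  have hc2 : ∀ i j, AG i = AG j → cN i = cN j → i = j := by
    intro i j h1 h2
    refine hcA i j ?_ ?_
    · rw [hAfdef]; exact Fin.ext h1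
    · exact Fin.ext h2
  set CM : Fin n → ℕ := fun i => cN i % 3 with hCMdef
  set J1 : Fin n → ℕ := fun i => cN i / 3 with hJ1def
  set D2 : Fin n → ℕ := fun i => 3 * AG i + CM i with hD2def
  set D3 : Fin n → ℕ := fun i => 3 * JG i + PG i with hD3def
  have hCMle : ∀ i, CM i ≤ 2 := fun i => by simp only [hCMdef]; omega
  have hcNeq : ∀ i, cN i = 3 * J1 i + CM i := fun i => by
    simp only [hCMdef, hJ1def]; omega
  have h3J1 : ∀ i, 3 * J1 i + 2 < m2 := fun i => by
    have := hcNlt i; have := hcNeq i; have := hCMle i; omega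
  have hD2lt : ∀ i, D2 i < m1 := fun i => by
    have := h3AG i; have := hCMle i; simp only [hD2def]; omega
  have hD3lt : ∀ i, D3 i < m2 := fun i => by
    have := h3JG i; have := hPGle i; simp only [hD3def]; omega
  -- pairwise separation facts
  have hP1ne : ∀ i j, i ≠ j → R0 i = R0 j → ¬(J0 i = J0 j ∧ U0 i = U0 j) := by
    rintro i j hij hR ⟨h1, h2⟩
    exact hij (hsval i j (by rw [hρ0eq i, hρ0eq j, hR, h2]) (by rw [hγ0eq i, hγ0eq j, h1]))
  have hP1D : ∀ i j, i ≠ j → R0 i = R0 j → cN i ≠ cN j := fun i j hij hR he =>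
    hij (hc1 i j hR he)
  have hP2ne : ∀ i j, i ≠ j → J1 i = J1 j → ¬(R0 i = R0 j ∧ CM i = CM j) := by
    rintro i j hij hJ ⟨h1, h2⟩
    exact hij (hc1 i j h1 (by rw [hcNeq i, hcNeq j, hJ, h2]))
  have hP2D : ∀ i j, i ≠ j → J1 i = J1 j → D2 i ≠ D2 j := by
    intro i j hij hJ he
    have h1 : AG i = AG j ∧ CM i = CM j := by
      have := hCMle i; have := hCMle j
      simp only [hD2def] at he
      constructor <;> omega
    exact hij (hc2 i j h1.1 (by rw [hcNeq i, hcNeq j, hJ, h1.2]))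
  have hP3ne : ∀ i j, i ≠ j → AG i = AG j → ¬(J1 i = J1 j ∧ CM i = CM j) := by
    rintro i j hij hA ⟨h1, h2⟩
    exact hij (hc2 i j hA (by rw [hcNeq i, hcNeq j, h1, h2]))
  have hP3D : ∀ i j, i ≠ j → AG i = AG j → D3 i ≠ D3 j := by
    intro i j hij hA he
    have h1 : JG i = JG j ∧ PG i = PG j := by
      have := hPGle i; have := hPGle j
      simp only [hD3def] at he
      constructor <;> omega
    exact hij (hgval i j (by rw [hρgeq i, hρgeq j, hA, h1.2]) (by rw [hγgeq i, hγgeq j, h1.1]))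
  have hP4ne : ∀ i j, i ≠ j → AG i = AG j → ¬(JG i = JG j ∧ PG i = PG j) := by
    rintro i j hij hA ⟨h1, h2⟩
    exact hij (hgval i j (by rw [hρgeq i, hρgeq j, hA, h2]) (by rw [hγgeq i, hγgeq j, h1]))
  -- the schedule
  set T1 : ℕ := m2 + 4 with hT1def
  set T2 : ℕ := T1 + (m1 + 4) with hT2def
  set T3 : ℕ := T2 + (m2 + 4) with hT3def
  set posN : Fin n → ℕ → ℕ × ℕ := fun i t =>
    if t ≤ T1 then
      (3 * R0 i + (GRH.phPos (J0 i) (U0 i) (cN i) t).1, (GRH.phPos (J0 i) (U0 i) (cN i) t).2)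
    else if t ≤ T2 then
      ((GRH.phPos (R0 i) (CM i) (D2 i) (t - T1)).2,
        3 * J1 i + (GRH.phPos (R0 i) (CM i) (D2 i) (t - T1)).1)
    else if t ≤ T3 then
      (3 * AG i + (GRH.phPos (J1 i) (CM i) (D3 i) (t - T2)).1,
        (GRH.phPos (J1 i) (CM i) (D3 i) (t - T2)).2)
    else
      (3 * AG i + (GRH.phPos (JG i) (PG i) (D3 i) (3 - min (t - T3) 3)).1,
        (GRH.phPos (JG i) (PG i) (D3 i) (3 - min (t - T3) 3)).2)
    with hposNdef
  have rep1 : ∀ i t, t ≤ T1 → posN i t =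
      (3 * R0 i + (GRH.phPos (J0 i) (U0 i) (cN i) t).1,
        (GRH.phPos (J0 i) (U0 i) (cN i) t).2) := by
    intro i t ht
    simp only [hposNdef]
    rw [if_pos ht]
  have rep2 : ∀ i t, T1 ≤ t → t ≤ T2 → posN i t =
      ((GRH.phPos (R0 i) (CM i) (D2 i) (t - T1)).2,
        3 * J1 i + (GRH.phPos (R0 i) (CM i) (D2 i) (t - T1)).1) := by
    intro i t h1 h2
    rcases Nat.lt_or_ge T1 t with h | h
    · simp only [hposNdef]
      rw [if_neg (by omega), if_pos h2]
    · have ht : t = T1 := le_antisymm h h1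
      subst ht
      rw [rep1 i T1 le_rfl]
      rw [GRH.phPos_stable (h3J0 i) (hcNlt i) (hU0le i) (by omega)]
      have h0 : T1 - T1 = 0 := by omega
      rw [h0, GRH.phPos_zero]
      dsimp only
      rw [Prod.mk.injEq]
      exact ⟨rfl, hcNeq i⟩
  have rep3 : ∀ i t, T2 ≤ t → t ≤ T3 → posN i t =
      (3 * AG i + (GRH.phPos (J1 i) (CM i) (D3 i) (t - T2)).1,
        (GRH.phPos (J1 i) (CM i) (D3 i) (t - T2)).2) := by
    intro i t h1 h2
    rcases Nat.lt_or_ge T2 t with h | h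
    · simp only [hposNdef]
      rw [if_neg (by omega), if_neg (by omega), if_pos h2]
    · have ht : t = T2 := le_antisymm h h1
      subst ht
      rw [rep2 i T2 (by omega) le_rfl]
      rw [GRH.phPos_stable (h3R0 i) (hD2lt i) (hCMle i) (by omega)]
      have h0 : T2 - T2 = 0 := by omega
      rw [h0, GRH.phPos_zero]
  have hrole3 : ∀ i, GRH.phPos (JG i) (PG i) (D3 i) 3 = (1, D3 i) := by
    intro i
    show (GRH.role (3 * JG i + PG i) (D3 i), 3 * JG i + PG i) = (1, D3 i)
    have hx : 3 * JG i + PG i = D3 i := (hD3def ▸ rfl : D3 i = _).symm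
    rw [hx]
    unfold GRH.role
    rw [if_neg (lt_irrefl _), if_neg (lt_irrefl _)]
  have rep4 : ∀ i t, T3 ≤ t → posN i t =
      (3 * AG i + (GRH.phPos (JG i) (PG i) (D3 i) (3 - min (t - T3) 3)).1,
        (GRH.phPos (JG i) (PG i) (D3 i) (3 - min (t - T3) 3)).2) := by
    intro i t h1
    rcases Nat.lt_or_ge T3 t with h | h
    · simp only [hposNdef]
      rw [if_neg (by omega), if_neg (by omega), if_neg (by omega)]
    · have ht : t = T3 := le_antisymm h h1
      subst ht
      rw [rep3 i T3 (by omega) le_rfl]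
      rw [GRH.phPos_stable (h3J1 i) (hD3lt i) (hCMle i) (by omega)]
      have h0 : 3 - min (T3 - T3) 3 = 3 := by omega
      rw [h0, hrole3 i]
  -- bounds
  have hB : ∀ i t, (posN i t).1 < m1 ∧ (posN i t).2 < m2 := by
    intro i t
    simp only [hposNdef]
    split_ifs with h1 h2 h3
    · constructor
      · have := GRH.phPos_cross_le (a := J0 i) (D := cN i) (hU0le i) t
        have := h3R0 i
        dsimp only; omega
      · have := GRH.phPos_along_lt (h3J0 i) (hcNlt i) (hU0le i) t
        dsimp only; omega
    · constructor
      · have := GRH.phPos_along_lt (h3R0 i) (hD2lt i) (hCMle i) (t - T1)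
        dsimp only; omega
      · have := GRH.phPos_cross_le (a := R0 i) (D := D2 i) (hCMle i) (t - T1)
        have := h3J1 i
        dsimp only; omega
    · constructor
      · have := GRH.phPos_cross_le (a := J1 i) (D := D3 i) (hCMle i) (t - T2)
        have := h3AG i
        dsimp only; omega
      · have := GRH.phPos_along_lt (h3J1 i) (hD3lt i) (hCMle i) (t - T2)
        dsimp only; omega
    · constructor
      · have := GRH.phPos_cross_le (a := JG i) (D := D3 i) (hPGle i) (3 - min (t - T3) 3)
        have := h3AG i
        dsimp only; omega
      · have := GRH.phPos_along_lt (h3JG i) (hD3lt i) (hPGle i) (3 - min (t - T3) 3)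
        dsimp only; omega
  -- vertex disjointness on posN
  have hdisjN : ∀ t i j, i ≠ j → posN i t ≠ posN j t := by
    intro t i j hij
    by_cases h1 : t ≤ T1
    · rw [rep1 i t h1, rep1 j t h1]
      by_cases hR : R0 i = R0 j
      · rw [hR]
        intro h
        exact GRH.phPos_disj (hU0le i) (hU0le j) (hP1ne i j hij hR) (hP1D i j hij hR) t
          (GRH.emb1_cancel h)
      · exact GRH.emb1_ne' (GRH.phPos_cross_le (hU0le i) t) (GRH.phPos_cross_le (hU0le j) t) hR
    · by_cases h2 : t ≤ T2
      · rw [rep2 i t (by omega) h2, rep2 j t (by omega) h2]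
        by_cases hJ : J1 i = J1 j
        · rw [hJ]
          intro h
          exact GRH.phPos_disj (hCMle i) (hCMle j) (hP2ne i j hij hJ) (hP2D i j hij hJ) (t - T1)
            (GRH.emb2_cancel h)
        · exact GRH.emb2_ne' (GRH.phPos_cross_le (hCMle i) (t - T1))
            (GRH.phPos_cross_le (hCMle j) (t - T1)) hJ
      · by_cases h3 : t ≤ T3
        · rw [rep3 i t (by omega) h3, rep3 j t (by omega) h3]
          by_cases hA : AG i = AG j
          · rw [hA]
            intro h
            exact GRH.phPos_disj (hCMle i) (hCMle j) (hP3ne i j hij hA) (hP3D i j hij hA) (t - T2)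
              (GRH.emb1_cancel h)
          · exact GRH.emb1_ne' (GRH.phPos_cross_le (hCMle i) (t - T2))
              (GRH.phPos_cross_le (hCMle j) (t - T2)) hA
        · rw [rep4 i t (by omega), rep4 j t (by omega)]
          by_cases hA : AG i = AG j
          · rw [hA]
            intro h
            exact GRH.phPos_disj (hPGle i) (hPGle j) (hP4ne i j hij hA) (hP3D i j hij hA)
              (3 - min (t - T3) 3) (GRH.emb1_cancel h)
          · exact GRH.emb1_ne' (GRH.phPos_cross_le (hPGle i) _)
              (GRH.phPos_cross_le (hPGle j) _) hA
  -- steps on posN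
  have hstepN : ∀ i t, 0 < t → posN i t = posN i (t-1) ∨
      GRH.NatAdj (posN i (t-1)) (posN i t) ∨ GRH.NatAdj (posN i t) (posN i (t-1)) := by
    intro i t ht
    by_cases h1 : t ≤ T1
    · rw [rep1 i t h1, rep1 i (t-1) (by omega)]
      have hs := GRH.phPos_step (a := J0 i) (D := cN i) (hU0le i) (t-1)
      have ht1 : t - 1 + 1 = t := by omega
      rw [ht1] at hs
      rcases hs with h | h
      · exact Or.inl (GRH.emb1_eq _ h)
      · exact Or.inr (Or.inl (GRH.natAdj_emb1 _ h))
    · by_cases h2 : t ≤ T2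
      · rw [rep2 i t (by omega) h2, rep2 i (t-1) (by omega) (by omega)]
        have hs := GRH.phPos_step (a := R0 i) (D := D2 i) (hCMle i) (t - 1 - T1)
        have ht1 : t - 1 - T1 + 1 = t - T1 := by omega
        rw [ht1] at hs
        rcases hs with h | h
        · exact Or.inl (GRH.emb2_eq _ h)
        · exact Or.inr (Or.inl (GRH.natAdj_emb2 _ h))
      · by_cases h3 : t ≤ T3
        · rw [rep3 i t (by omega) h3, rep3 i (t-1) (by omega) (by omega)]
          have hs := GRH.phPos_step (a := J1 i) (D := D3 i) (hCMle i) (t - 1 - T2)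
          have ht1 : t - 1 - T2 + 1 = t - T2 := by omega
          rw [ht1] at hs
          rcases hs with h | h
          · exact Or.inl (GRH.emb1_eq _ h)
          · exact Or.inr (Or.inl (GRH.natAdj_emb1 _ h))
        · rw [rep4 i t (by omega), rep4 i (t-1) (by omega)]
          by_cases hsat : T3 + 4 ≤ t
          · have he : 3 - min (t - T3) 3 = 3 - min (t - 1 - T3) 3 := by omega
            rw [he]
            exact Or.inl rfl
          · have he : 3 - min (t - 1 - T3) 3 = (3 - min (t - T3) 3) + 1 := by omega
            rw [he]
            have hs := GRH.phPos_step (a := JG i) (D := D3 i) (hPGle i) (3 - min (t - T3) 3)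
            rcases hs with h | h
            · exact Or.inl (GRH.emb1_eq _ h.symm)
            · exact Or.inr (Or.inr (GRH.natAdj_emb1 _ h))
  -- no swaps on posN
  have hswapN : ∀ t i j, i ≠ j →
      ¬(posN i t = posN j (t+1) ∧ posN j t = posN i (t+1)) := by
    intro t i j hij
    by_cases h1 : t + 1 ≤ T1
    · rw [rep1 i t (by omega), rep1 j t (by omega), rep1 i (t+1) h1, rep1 j (t+1) h1]
      by_cases hR : R0 i = R0 j
      · rw [hR]
        rintro ⟨hA, hBB⟩
        exact GRH.phPos_noswap (hU0le i) (hU0le j) (hP1ne i j hij hR) (hP1D i j hij hR) t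
          ⟨GRH.emb1_cancel hA, GRH.emb1_cancel hBB⟩
      · rintro ⟨hA, -⟩
        exact GRH.emb1_ne' (GRH.phPos_cross_le (hU0le i) t)
          (GRH.phPos_cross_le (hU0le j) (t+1)) hR hA
    · by_cases h2 : t + 1 ≤ T2
      · have e1 : ∀ l, posN l t = ((GRH.phPos (R0 l) (CM l) (D2 l) (t - T1)).2,
            3 * J1 l + (GRH.phPos (R0 l) (CM l) (D2 l) (t - T1)).1) :=
          fun l => rep2 l t (by omega) (by omega)
        have e2 : ∀ l, posN l (t+1) = ((GRH.phPos (R0 l) (CM l) (D2 l) (t - T1 + 1)).2,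
            3 * J1 l + (GRH.phPos (R0 l) (CM l) (D2 l) (t - T1 + 1)).1) := by
          intro l
          have : t + 1 - T1 = t - T1 + 1 := by omega
          rw [rep2 l (t+1) (by omega) h2, this]
        rw [e1 i, e1 j, e2 i, e2 j]
        by_cases hJ : J1 i = J1 j
        · rw [hJ]
          rintro ⟨hA, hBB⟩
          exact GRH.phPos_noswap (hCMle i) (hCMle j) (hP2ne i j hij hJ) (hP2D i j hij hJ)
            (t - T1) ⟨GRH.emb2_cancel hA, GRH.emb2_cancel hBB⟩
        · rintro ⟨hA, -⟩
          exact GRH.emb2_ne' (GRH.phPos_cross_le (hCMle i) _)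
            (GRH.phPos_cross_le (hCMle j) _) hJ hA
      · by_cases h3 : t + 1 ≤ T3
        · have e1 : ∀ l, posN l t = (3 * AG l + (GRH.phPos (J1 l) (CM l) (D3 l) (t - T2)).1,
              (GRH.phPos (J1 l) (CM l) (D3 l) (t - T2)).2) :=
            fun l => rep3 l t (by omega) (by omega)
          have e2 : ∀ l, posN l (t+1) = (3 * AG l + (GRH.phPos (J1 l) (CM l) (D3 l) (t - T2 + 1)).1,
              (GRH.phPos (J1 l) (CM l) (D3 l) (t - T2 + 1)).2) := by
            intro l
            have : t + 1 - T2 = t - T2 + 1 := by omega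
            rw [rep3 l (t+1) (by omega) h3, this]
          rw [e1 i, e1 j, e2 i, e2 j]
          by_cases hA : AG i = AG j
          · rw [hA]
            rintro ⟨hA', hBB⟩
            exact GRH.phPos_noswap (hCMle i) (hCMle j) (hP3ne i j hij hA) (hP3D i j hij hA)
              (t - T2) ⟨GRH.emb1_cancel hA', GRH.emb1_cancel hBB⟩
          · rintro ⟨hA', -⟩
            exact GRH.emb1_ne' (GRH.phPos_cross_le (hCMle i) _)
              (GRH.phPos_cross_le (hCMle j) _) hA hA'
        · -- t + 1 > T3, so t ≥ T3
          by_cases hsat : T3 + 3 ≤ t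
          · have he : ∀ l, posN l (t+1) = posN l t := by
              intro l
              rw [rep4 l t (by omega), rep4 l (t+1) (by omega)]
              have : 3 - min (t + 1 - T3) 3 = 3 - min (t - T3) 3 := by omega
              rw [this]
            rintro ⟨hA, -⟩
            rw [he j] at hA
            exact hdisjN t i j hij hA
          · have e1 : ∀ l, posN l t =
                (3 * AG l + (GRH.phPos (JG l) (PG l) (D3 l) ((3 - min (t + 1 - T3) 3) + 1)).1,
                  (GRH.phPos (JG l) (PG l) (D3 l) ((3 - min (t + 1 - T3) 3) + 1)).2) := by
              intro l
              have : 3 - min (t - T3) 3 = (3 - min (t + 1 - T3) 3) + 1 := by omega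
              rw [rep4 l t (by omega), this]
            have e2 : ∀ l, posN l (t+1) =
                (3 * AG l + (GRH.phPos (JG l) (PG l) (D3 l) (3 - min (t + 1 - T3) 3)).1,
                  (GRH.phPos (JG l) (PG l) (D3 l) (3 - min (t + 1 - T3) 3)).2) :=
              fun l => rep4 l (t+1) (by omega)
            rw [e1 i, e1 j, e2 i, e2 j]
            by_cases hA : AG i = AG j
            · rw [hA]
              rintro ⟨hA', hBB⟩
              refine GRH.phPos_noswap (hPGle j) (hPGle i)
                (fun hcon => hP4ne i j hij hA ⟨hcon.1.symm, hcon.2.symm⟩)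
                (fun hcon => hP3D i j hij hA hcon.symm)
                (3 - min (t + 1 - T3) 3) ⟨?_, ?_⟩
              · exact (GRH.emb1_cancel hA').symm
              · exact (GRH.emb1_cancel hBB).symm
            · rintro ⟨hA', -⟩
              exact GRH.emb1_ne' (GRH.phPos_cross_le (hPGle i) _)
                (GRH.phPos_cross_le (hPGle j) _) hA hA'
  -- final position
  have hfinN : ∀ i t, T3 + 3 ≤ t → posN i t = (ρg i, γg i) := by
    intro i t ht
    rw [rep4 i t (by omega)]
    have hk : 3 - min (t - T3) 3 = 0 := by omega
    rw [hk, GRH.phPos_zero]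
    dsimp only
    rw [Prod.mk.injEq]
    exact ⟨(hρgeq i).symm, (hγgeq i).symm⟩
  -- assemble
  refine ⟨fun i t => (⟨(posN i t).1, (hB i t).1⟩, ⟨(posN i t).2, (hB i t).2⟩), ?_, ?_⟩
  · refine ⟨?_, ?_, ?_, ?_, ?_⟩
    · -- start
      intro i
      have h0 : posN i 0 = (ρ0 i, γ0 i) := by
        rw [rep1 i 0 (by omega), GRH.phPos_zero]
        dsimp only
        rw [Prod.mk.injEq]
        exact ⟨(hρ0eq i).symm, (hγ0eq i).symm⟩
      exact Prod.ext (Fin.ext (congrArg Prod.fst h0)) (Fin.ext (congrArg Prod.snd h0))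
    · -- steps
      intro i t ht
      rcases hstepN i t ht with h | h | h
      · left
        exact Prod.ext (Fin.ext (congrArg Prod.fst h)) (Fin.ext (congrArg Prod.snd h))
      · right
        unfold GridAdj
        dsimp only
        unfold GRH.NatAdj at h
        omega
      · right
        unfold GridAdj
        dsimp only
        unfold GRH.NatAdj at h
        omega
    · -- eventually at goal
      intro i
      refine ⟨T3 + 3, fun t ht => ?_⟩
      have h0 := hfinN i t ht
      exact Prod.ext (Fin.ext (congrArg Prod.fst h0)) (Fin.ext (congrArg Prod.snd h0))
    · -- vertex disjoint
      intro t i j hij h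
      refine hdisjN t i j hij ?_
      have h1 := congrArg (fun p => (p.1 : ℕ)) h
      have h2 := congrArg (fun p => (p.2 : ℕ)) h
      exact Prod.ext h1 h2
    · -- no swaps
      intro t i j hij h
      refine hswapN t i j hij ⟨?_, ?_⟩
      · exact Prod.ext (congrArg (fun p => (p.1 : ℕ)) h.1) (congrArg (fun p => (p.2 : ℕ)) h.1)
      · exact Prod.ext (congrArg (fun p => (p.1 : ℕ)) h.2) (congrArg (fun p => (p.2 : ℕ)) h.2)
  · -- makespan
    intro i t ht
    have h0 := hfinN i t (by omega)
    exact Prod.ext (Fin.ext (congrArg Prod.fst h0)) (Fin.ext (congrArg Prod.snd h0))
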